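/- Let v ∈ ℝⁿ \ {0} with δ = |v·e₁|/|v| < 1, and set λ₁ = (1−δ)/(16√2). Then for every t ∈ ℝ with |t| ≥ 1, every x ∈ ℝⁿ with |x| ≤ 4λ₁|v|⟨t⟩, and every ν ∈ [0,1], one has |x + v t + e₁ t²/2| ≥ c₁^{ν} c₂^{1−ν} |v|^{ν} |t|^{2−ν}, where c₁ = √(2(1−δ²))/2 and c₂ = √(2(1−δ²))/(3+δ). -/

import Mathlib

open scoped InnerProductSpace
open MeasureTheory Real Filter

noncomputable section

lemma le_of_sq_le_sq' (R N : ℝ) (hR : 0 ≤ R) (hN : 0 ≤ N) (h : R ^ 2 ≤ N ^ 2) : R ≤ N := by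
  nlinarith

lemma hLkey (δ E : ℝ) (h0 : 0 ≤ δ) (h1 : δ ≤ 1) (hE : 0 ≤ E)
    (hE2 : E ^ 2 = 2 * (1 - δ ^ 2)) :
    16 * δ * (3 + δ) * (1 - δ) * E ≤ 7 + 108*δ + 2*δ^2 - 100*δ^3 - 17*δ^4 := by
  have hLnn : (0:ℝ) ≤ 7 + 108*δ + 2*δ^2 - 100*δ^3 - 17*δ^4 := by nlinarith
  have hXnn : (0:ℝ) ≤ 16 * δ * (3 + δ) * (1 - δ) * E := by
    apply mul_nonneg (mul_nonneg (mul_nonneg (by linarith) (by linarith)) (by linarith)) hE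
  have hQ : (16 * δ * (3 + δ) * (1 - δ) * E)^2 ≤ (7 + 108*δ + 2*δ^2 - 100*δ^3 - 17*δ^4)^2 := by
    have hid : (7 + 108*δ + 2*δ^2 - 100*δ^3 - 17*δ^4)^2 - (16 * δ * (3 + δ) * (1 - δ))^2 * (2*(1-δ^2))
        = (1-δ)^2 * (49 + 1610*δ + 10255*δ^2 + 24076*δ^3 + 21695*δ^4 + 7050*δ^5 + 801*δ^6) := by
      ring
    nlinarith [sq_nonneg (1-δ), mul_nonneg (sq_nonneg (1-δ)) (show (0:ℝ) ≤ 49 + 1610*δ + 10255*δ^2 + 24076*δ^3 + 21695*δ^4 + 7050*δ^5 + 801*δ^6 by positivity)]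
  nlinarith [hQ, hLnn, hXnn]

lemma keyII (δ E A B : ℝ) (h0 : 0 ≤ δ) (h1 : δ ≤ 1) (hE : 0 ≤ E)
    (hE2 : E ^ 2 = 2 * (1 - δ ^ 2)) (hA : 0 ≤ A) (hB : 0 ≤ B) :
    ((1 - δ) * A / 4 + 2 * E * B / (3 + δ)) ^ 2 ≤ A ^ 2 - 2 * δ * A * B + B ^ 2 := by
  have h3 : (0:ℝ) < 3 + δ := by linarith
  set p : ℝ := (3+δ)^2 * (16 - (1-δ)^2) with hp_def
  set m : ℝ := 32*δ*(3+δ)^2 + 16*(1-δ)*(3+δ)*E with hm_def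
  set q : ℝ := 16*(3*δ+1)^2 with hq_def
  have hp : (0:ℝ) < p := by
    have : (0:ℝ) < 16 - (1-δ)^2 := by nlinarith
    positivity
  have hL := hLkey δ E h0 h1 hE hE2
  have hd : 4*p*q - m^2 = 64*(3+δ)^2 * ((7 + 108*δ + 2*δ^2 - 100*δ^3 - 17*δ^4) - 16 * δ * (3 + δ) * (1 - δ) * E) := by
    rw [hp_def, hm_def, hq_def]
    linear_combination (-(256*(1-δ)^2*(3+δ)^2)) * hE2
  have h4 : 0 ≤ 4*p*q - m^2 := by
    rw [hd]
    exact mul_nonneg (by positivity) (by linarith)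
  have h5 : 0 ≤ p*A^2 - m*A*B + q*B^2 := by
    nlinarith [sq_nonneg (2*p*A - m*B), mul_nonneg h4 (sq_nonneg B), hp]
  have hid : 16*(3+δ)^2 * (A^2 - 2*δ*A*B + B^2) - ((1-δ)*(3+δ)*A + 8*E*B)^2
      = p*A^2 - m*A*B + q*B^2 := by
    rw [hp_def, hm_def, hq_def]
    linear_combination (-64*B^2) * hE2
  have hG : ((1 - δ) * A / 4 + 2 * E * B / (3 + δ)) = ((1-δ)*(3+δ)*A + 8*E*B) / (4*(3+δ)) := by
    field_simp
    ring
  rw [hG, div_pow, div_le_iff₀ (by positivity)]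
  nlinarith [h5, hid]

/-- Case II in clean form. -/
lemma auxII (δ E A B N : ℝ) (h0 : 0 ≤ δ) (h1 : δ ≤ 1) (hE : 0 ≤ E)
    (hE2 : E ^ 2 = 2 * (1 - δ ^ 2)) (hA : 0 ≤ A) (hB : 0 ≤ B) (hN : 0 ≤ N)
    (hlow : A ^ 2 - 2 * δ * A * B + B ^ 2 ≤ N ^ 2) :
    (1 - δ) * A / 4 + 2 * E * B / (3 + δ) ≤ N := by
  have h3 : (0:ℝ) < 3 + δ := by linarith
  have hRnn : 0 ≤ (1 - δ) * A / 4 + 2 * E * B / (3 + δ) := by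
    have hh1 : 0 ≤ (1-δ) * A / 4 := div_nonneg (mul_nonneg (by linarith) hA) (by norm_num)
    have hh2 : 0 ≤ 2 * E * B / (3+δ) := by positivity
    linarith
  exact le_of_sq_le_sq' _ _ hRnn hN (le_trans (keyII δ E A B h0 h1 hE hE2 hA hB) hlow)

/-- Case I in clean form. -/
lemma auxI (δ E A B N : ℝ) (h0 : 0 ≤ δ) (h1 : δ ≤ 1) (hE : 0 ≤ E)
    (hE2 : E ^ 2 = 2 * (1 - δ ^ 2)) (hA : 0 ≤ A) (hN : 0 ≤ N)
    (hlow : A ^ 2 - 2 * δ * A * B + B ^ 2 ≤ N ^ 2) :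
    (1 - δ) * A / 4 + (E / 2) * A ≤ N := by
  have hDsq : 0 ≤ 1 - δ ^ 2 := by nlinarith
  set D : ℝ := Real.sqrt (1 - δ ^ 2) with hD_def
  have hDnn : 0 ≤ D := Real.sqrt_nonneg _
  have hD2 : D ^ 2 = 1 - δ ^ 2 := Real.sq_sqrt hDsq
  have hD1δ : 1 - δ ≤ D := by nlinarith [hD2, hDnn]
  have hE32 : E ≤ 3/2 * D := by nlinarith [hE2, hD2, hDnn]
  have hND : D * A ≤ N := by
    apply le_of_sq_le_sq' _ _ (mul_nonneg hDnn hA) hN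
    nlinarith [sq_nonneg (δ*A - B), hD2, hlow]
  have hc : (1 - δ) / 4 + E / 2 ≤ D := by linarith
  calc (1 - δ) * A / 4 + (E / 2) * A = ((1 - δ) / 4 + E / 2) * A := by ring
    _ ≤ D * A := mul_le_mul_of_nonneg_right hc hA
    _ ≤ N := hND

/-- the lower bound on N^2 in clean form -/
lemma auxlow (δ V t s I A B N : ℝ) (hs : s = |t|) (hA : A = V * s) (hB : B = t^2/2)
    (hIl : -(s * B * (δ * V)) ≤ t * (t^2/2) * I)
    (hN2 : N ^ 2 = t^2 * V^2 + 2 * (t * (t^2/2)) * I + (t^2/2)^2) :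
    A ^ 2 - 2 * δ * A * B + B ^ 2 ≤ N ^ 2 := by
  subst hA hB hs
  have hs2 : |t| ^ 2 = t ^ 2 := sq_abs t
  nlinarith [hIl, hN2, hs2]

theorem stmt_2 (n : ℕ) (hn : 2 ≤ n)
    (v : EuclideanSpace ℝ (Fin n)) (hv : v ≠ 0)
    (e1 : EuclideanSpace ℝ (Fin n))
    (he1 : e1 = EuclideanSpace.single ⟨0, by omega⟩ (1 : ℝ))
    (δ : ℝ) (hδ : δ = |⟪v, e1⟫_ℝ| / ‖v‖) (hδ1 : δ < 1)
    (lam : ℝ) (hlam : lam = (1 - δ) / (16 * Real.sqrt 2))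
    (c1 c2 : ℝ) (hc1 : c1 = Real.sqrt (2 * (1 - δ ^ 2)) / 2)
    (hc2 : c2 = Real.sqrt (2 * (1 - δ ^ 2)) / (3 + δ))
    (t : ℝ) (ht : 1 ≤ |t|)
    (x : EuclideanSpace ℝ (Fin n))
    (hx : ‖x‖ ≤ 4 * lam * ‖v‖ * Real.sqrt (1 + t ^ 2))
    (ν : ℝ) (hν : ν ∈ Set.Icc (0 : ℝ) 1) :
    c1 ^ ν * c2 ^ (1 - ν) * ‖v‖ ^ ν * |t| ^ (2 - ν)
      ≤ ‖x + t • v + (t ^ 2 / 2) • e1‖ := by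
  obtain ⟨hν0, hν1⟩ := hν
  set V : ℝ := ‖v‖ with hV_def
  have hV : 0 < V := norm_pos_iff.mpr hv
  set s : ℝ := |t| with hs_def
  have hs1 : (1:ℝ) ≤ s := ht
  have hs0 : (0:ℝ) < s := by linarith
  have hδ0 : 0 ≤ δ := by rw [hδ]; positivity
  have hδsq : δ ^ 2 < 1 := by
    have := mul_lt_one_of_nonneg_of_lt_one_right hδ1.le hδ0 hδ1
    calc δ ^ 2 = δ * δ := sq δ
      _ < 1 := this
  set E : ℝ := Real.sqrt (2 * (1 - δ ^ 2)) with hE_def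
  have hEnn : 0 ≤ E := Real.sqrt_nonneg _
  have hE2 : E ^ 2 = 2 * (1 - δ ^ 2) := Real.sq_sqrt (by linarith)
  have hEpos : 0 < E := Real.sqrt_pos.mpr (by linarith)
  have h3 : (0:ℝ) < 3 + δ := by linarith
  set A : ℝ := V * s with hA_def
  set B : ℝ := t ^ 2 / 2 with hB_def
  have hA0 : 0 < A := by positivity
  have hs2 : s ^ 2 = t ^ 2 := sq_abs t
  have ht2 : (1:ℝ) ≤ t ^ 2 := by
    calc (1:ℝ) = 1 * 1 := by ring
      _ ≤ s * s := mul_le_mul hs1 hs1 zero_le_one (le_trans zero_le_one hs1)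
      _ = s ^ 2 := (sq s).symm
      _ = t ^ 2 := hs2
  have hB0 : 0 < B := by rw [hB_def]; linarith
  have hinner : |⟪v, e1⟫_ℝ| = δ * V := by
    rw [hδ]; field_simp
  set N : ℝ := ‖t • v + (t ^ 2 / 2) • e1‖ with hN_def
  have hNnn : 0 ≤ N := norm_nonneg _
  have he1n : ‖e1‖ = 1 := by rw [he1, EuclideanSpace.norm_single]; norm_num
  have hN2 : N ^ 2 = t^2 * V^2 + 2 * (t * (t^2/2)) * ⟪v, e1⟫_ℝ + (t^2/2)^2 := by
    rw [hN_def, @norm_add_sq_real]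
    rw [real_inner_smul_left, real_inner_smul_right]
    rw [norm_smul, norm_smul, he1n]
    simp only [Real.norm_eq_abs]
    rw [mul_pow, mul_pow, sq_abs, sq_abs]
    ring
  have hIl : -(s * B * (δ * V)) ≤ t * (t^2/2) * ⟪v, e1⟫_ℝ := by
    have habs : |t * (t^2/2) * ⟪v, e1⟫_ℝ| = s * B * (δ * V) := by
      rw [abs_mul, abs_mul, hinner, hB_def, abs_of_nonneg (by positivity : (0:ℝ) ≤ t^2/2)]
    calc -(s * B * (δ * V)) = -|t * (t^2/2) * ⟪v, e1⟫_ℝ| := by rw [habs]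
      _ ≤ t * (t^2/2) * ⟪v, e1⟫_ℝ := neg_abs_le _
  have hlow : A ^ 2 - 2 * δ * A * B + B ^ 2 ≤ N ^ 2 :=
    auxlow δ V t s _ A B N hs_def hA_def hB_def hIl hN2
  have hc1E : c1 = E / 2 := by rw [hc1, hE_def]
  have hc2E : c2 = E / (3 + δ) := by rw [hc2, hE_def]
  have hcaseI : (1 - δ) * A / 4 + c1 * A ≤ N := by
    rw [hc1E]
    exact auxI δ E A B N hδ0 hδ1.le hEnn hE2 hA0.le hNnn hlow
  have hcaseII : (1 - δ) * A / 4 + c2 * t ^ 2 ≤ N := by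
    have hr : c2 * t ^ 2 = 2 * E * B / (3 + δ) := by
      rw [hc2E, hB_def]; field_simp
    rw [hr]
    exact auxII δ E A B N hδ0 hδ1.le hEnn hE2 hA0.le hB0.le hNnn hlow
  have hxA : ‖x‖ ≤ (1 - δ) * A / 4 := by
    have hsq2 : Real.sqrt (1 + t^2) ≤ Real.sqrt 2 * s := by
      have h : Real.sqrt 2 * s = Real.sqrt (2 * s^2) := by
        rw [Real.sqrt_mul (by norm_num), Real.sqrt_sq hs0.le]
      rw [h]
      apply Real.sqrt_le_sqrt
      rw [hs2]; linarith
    have hlamnn : 0 ≤ lam := by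
      rw [hlam]
      apply div_nonneg (by linarith)
      positivity
    have hcoef : 4 * lam * Real.sqrt 2 = (1 - δ) / 4 := by
      have hs2pos : (0:ℝ) < Real.sqrt 2 := Real.sqrt_pos.mpr (by norm_num)
      rw [hlam]; field_simp; ring
    calc ‖x‖ ≤ 4 * lam * V * Real.sqrt (1 + t^2) := hx
      _ ≤ 4 * lam * V * (Real.sqrt 2 * s) := by
          apply mul_le_mul_of_nonneg_left hsq2 (by positivity)
      _ = (4 * lam * Real.sqrt 2) * (V * s) := by ring
      _ = (1 - δ) * A / 4 := by rw [hcoef, hA_def]; ring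
  have hc1nn : 0 ≤ c1 := by rw [hc1E]; positivity
  have hc2nn : 0 ≤ c2 := by rw [hc2E]; positivity
  have ha : 0 < c1 * A := by rw [hc1E]; positivity
  have hb : 0 < c2 * t ^ 2 := by
    rw [hc2E]
    have ht2' : (0:ℝ) < t^2 := by linarith
    positivity
  have h1 : (c1 * A) ^ ν = c1 ^ ν * V ^ ν * s ^ ν := by
    rw [hA_def, Real.mul_rpow hc1nn (by positivity), Real.mul_rpow hV.le hs0.le]
    ring
  have h2 : (c2 * t ^ 2) ^ (1 - ν) = c2 ^ (1 - ν) * s ^ (2 * (1 - ν)) := by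
    rw [← hs2, Real.mul_rpow hc2nn (by positivity)]
    congr 1
    rw [← Real.rpow_natCast s 2, ← Real.rpow_mul hs0.le]
    norm_num
  have hsplit : s ^ (2 - ν) = s ^ ν * s ^ (2 * (1 - ν)) := by
    rw [← Real.rpow_add hs0]; congr 1; ring
  have hT : c1 ^ ν * c2 ^ (1 - ν) * V ^ ν * s ^ (2 - ν)
      = (c1 * A) ^ ν * (c2 * t ^ 2) ^ (1 - ν) := by
    rw [h1, h2, hsplit]; ring
  have hmax : (c1 * A) ^ ν * (c2 * t ^ 2) ^ (1 - ν) ≤ max (c1 * A) (c2 * t ^ 2) := by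
    have hM0 : 0 < max (c1 * A) (c2 * t ^ 2) := lt_max_of_lt_left ha
    calc (c1 * A) ^ ν * (c2 * t ^ 2) ^ (1 - ν)
        ≤ (max (c1 * A) (c2 * t ^ 2)) ^ ν * (max (c1 * A) (c2 * t ^ 2)) ^ (1 - ν) := by
          apply mul_le_mul
          · exact Real.rpow_le_rpow ha.le (le_max_left _ _) hν0
          · exact Real.rpow_le_rpow hb.le (le_max_right _ _) (by linarith)
          · exact Real.rpow_nonneg hb.le _
          · exact Real.rpow_nonneg hM0.le _
      _ = (max (c1 * A) (c2 * t ^ 2)) ^ (ν + (1 - ν)) := (Real.rpow_add hM0 _ _).symm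
      _ = max (c1 * A) (c2 * t ^ 2) := by norm_num
  have hfin : N ≤ ‖x + t • v + (t ^ 2 / 2) • e1‖ + ‖x‖ := by
    have heq : t • v + (t ^ 2 / 2) • e1 = (x + t • v + (t ^ 2 / 2) • e1) - x := by abel
    rw [hN_def, heq]
    exact norm_sub_le _ _
  have hmaxle : max (c1 * A) (c2 * t ^ 2) ≤ N - (1 - δ) * A / 4 :=
    max_le (by linarith) (by linarith)
  calc c1 ^ ν * c2 ^ (1 - ν) * V ^ ν * s ^ (2 - ν)
      = (c1 * A) ^ ν * (c2 * t ^ 2) ^ (1 - ν) := hT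
    _ ≤ max (c1 * A) (c2 * t ^ 2) := hmax
    _ ≤ N - (1 - δ) * A / 4 := hmaxle
    _ ≤ ‖x + t • v + (t ^ 2 / 2) • e1‖ := by linarith
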